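/- Let σ ∈ (1/2, 1). Then for every ξ ∈ ℝ with |ξ| ≤ 1/2, p_1(ξ) ≤ σ(2σ−1) · 2^{2−2σ} · ξ²; consequently p_1(ξ) ≤ σ(2σ−1)|ξ|^{2σ} for |ξ| ≤ 1/2. -/

import Mathlib

open Real

/-- The symbol `p₁(ξ) = |ξ+1|^{2σ} − 1 − 2σξ`. -/
noncomputable def pOne (σ : ℝ) (ξ : ℝ) : ℝ := |ξ + 1| ^ (2*σ) - 1 - 2*σ*ξ

/-- For `|ξ| ≤ 1/2` one has `p₁(ξ) ≤ σ(2σ−1)2^{2−2σ}ξ²`, hence `p₁(ξ) ≤ σ(2σ−1)|ξ|^{2σ}`. -/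
theorem pOne_low_freq_bound (σ : ℝ) (hσ : σ ∈ Set.Ioo (1/2 : ℝ) 1) :
    ∀ ξ : ℝ, |ξ| ≤ 1/2 →
      pOne σ ξ ≤ σ*(2*σ - 1) * (2 : ℝ) ^ (2 - 2*σ) * ξ ^ 2 ∧
      pOne σ ξ ≤ σ*(2*σ - 1) * |ξ| ^ (2*σ) := by
  obtain ⟨hσ1, hσ2⟩ := hσ
  have hσ0 : 0 < σ := by linarith
  have h2σ1 : (1:ℝ) ≤ 2*σ := by linarith
  have h2σm1 : (0:ℝ) < 2*σ - 1 := by linarith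
  set C : ℝ := σ*(2*σ - 1) * (2 : ℝ) ^ (2 - 2*σ) with hCdef
  have hCpos : 0 < C := by
    have := Real.rpow_pos_of_pos (by norm_num : (0:ℝ) < 2) (2 - 2*σ)
    positivity
  set g : ℝ → ℝ := fun x => C*x^2 + 1 + 2*σ*x - (x+1)^(2*σ) with hg
  set g1 : ℝ → ℝ := fun x => 2*C*x + 2*σ - 2*σ*(x+1)^(2*σ-1) with hg1
  have hderiv : ∀ x : ℝ, HasDerivAt g (g1 x) x := by
    intro x
    have h1 : HasDerivAt (fun x : ℝ => x + 1) 1 x := (hasDerivAt_id x).add_const 1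
    have h2 : HasDerivAt (fun y : ℝ => y ^ (2*σ)) (2*σ * (x+1)^(2*σ-1)) (x+1) :=
      Real.hasDerivAt_rpow_const (Or.inr h2σ1)
    have h3 : HasDerivAt (fun x : ℝ => (x+1)^(2*σ)) (2*σ * (x+1)^(2*σ-1) * 1) x :=
      HasDerivAt.comp (h₂ := fun y : ℝ => y ^ (2*σ)) x h2 h1
    have hx2 : HasDerivAt (fun x : ℝ => x^2) (2*x) x := by
      simpa using hasDerivAt_pow 2 x
    have h4 : HasDerivAt (fun x : ℝ => C*x^2 + 1 + 2*σ*x)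
        (C*(2*x) + 2*σ*1) x :=
      ((hx2.const_mul C).add_const 1).add ((hasDerivAt_id x).const_mul (2*σ))
    have := h4.sub h3
    refine this.congr_deriv ?_
    ring
  have hderiv1 : ∀ x : ℝ, x + 1 ≠ 0 →
      HasDerivAt g1 (2*C - 2*σ*((2*σ-1) * (x+1)^(2*σ-2))) x := by
    intro x hx
    have h1 : HasDerivAt (fun x : ℝ => x + 1) 1 x := (hasDerivAt_id x).add_const 1
    have h2 : HasDerivAt (fun y : ℝ => y ^ (2*σ-1)) ((2*σ-1) * (x+1)^(2*σ-1-1)) (x+1) :=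
      Real.hasDerivAt_rpow_const (Or.inl hx)
    have h3 : HasDerivAt (fun x : ℝ => (x+1)^(2*σ-1)) ((2*σ-1) * (x+1)^(2*σ-1-1) * 1) x :=
      HasDerivAt.comp (h₂ := fun y : ℝ => y ^ (2*σ-1)) x h2 h1
    have h4 : HasDerivAt (fun x : ℝ => 2*C*x + 2*σ) (2*C*1) x :=
      ((hasDerivAt_id x).const_mul (2*C)).add_const (2*σ)
    have := h4.sub (h3.const_mul (2*σ))
    refine this.congr_deriv ?_
    have : 2*σ-1-1 = 2*σ-2 := by ring
    rw [this]; ring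
  -- the half-power identity
  have hhalf : ((1:ℝ)/2) ^ (2*σ-2) = (2:ℝ) ^ (2-2*σ) := by
    rw [show ((1:ℝ)/2) = (2:ℝ)⁻¹ by norm_num,
      Real.inv_rpow (by norm_num), ← Real.rpow_neg (by norm_num)]
    norm_num
  -- second derivative nonneg on the interval
  have hsecond : ∀ x ∈ Set.Icc (-(1/2):ℝ) (1/2),
      0 ≤ 2*C - 2*σ*((2*σ-1) * (x+1)^(2*σ-2)) := by
    intro x hx
    have hx1 : (1/2:ℝ) ≤ x + 1 := by have := hx.1; linarith
    have h5 : (x+1)^(2*σ-2) ≤ ((1:ℝ)/2)^(2*σ-2) :=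
      Real.rpow_le_rpow_of_nonpos (by norm_num) hx1 (by linarith)
    rw [hhalf] at h5
    have h6 : 2*σ*((2*σ-1) * (x+1)^(2*σ-2)) ≤ 2*σ*((2*σ-1) * (2:ℝ)^(2-2*σ)) := by
      have : (0:ℝ) ≤ 2*σ*(2*σ-1) := by positivity
      nlinarith [Real.rpow_pos_of_pos (by norm_num : (0:ℝ)<2) (2-2*σ)]
    have : 2*σ*((2*σ-1) * (2:ℝ)^(2-2*σ)) = 2*C := by rw [hCdef]; ring
    linarith
  -- g1 is monotone on the interval
  have hg1cont : ContinuousOn g1 (Set.Icc (-(1/2):ℝ) (1/2)) := by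
    intro x hx
    have hx1 : x + 1 ≠ 0 := by have := hx.1; intro h; simp at hx ⊢; nlinarith [hx.1]
    exact ((hderiv1 x hx1).continuousAt).continuousWithinAt
  have hg1mono : MonotoneOn g1 (Set.Icc (-(1/2):ℝ) (1/2)) := by
    apply monotoneOn_of_deriv_nonneg (convex_Icc _ _) hg1cont
    · intro x hx
      rw [interior_Icc] at hx
      have hx1 : x + 1 ≠ 0 := by have := hx.1; intro h; nlinarith
      exact (hderiv1 x hx1).differentiableAt.differentiableWithinAt
    · intro x hx
      rw [interior_Icc] at hx
      have hx1 : x + 1 ≠ 0 := by have := hx.1; intro h; nlinarith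
      rw [(hderiv1 x hx1).deriv]
      exact hsecond x ⟨le_of_lt hx.1, le_of_lt hx.2⟩
  have hg10 : g1 0 = 0 := by
    simp only [hg1]
    rw [show (0:ℝ)+1 = 1 by ring, Real.one_rpow]
    ring
  have hgcont : Continuous g := by
    have : Differentiable ℝ g := fun x => (hderiv x).differentiableAt
    exact this.continuous
  have hg0 : g 0 = 0 := by
    simp only [hg]
    rw [show (0:ℝ)+1 = 1 by ring, Real.one_rpow]
    ring
  -- g ≥ 0 on the interval
  have hgnonneg : ∀ x ∈ Set.Icc (-(1/2):ℝ) (1/2), 0 ≤ g x := by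
    intro x hx
    rcases le_or_gt 0 x with hx0 | hx0
    · -- monotone on [0,1/2]
      have hmono : MonotoneOn g (Set.Icc (0:ℝ) (1/2)) := by
        apply monotoneOn_of_deriv_nonneg (convex_Icc _ _) hgcont.continuousOn
        · intro y hy
          exact (hderiv y).differentiableAt.differentiableWithinAt
        · intro y hy
          rw [interior_Icc] at hy
          rw [(hderiv y).deriv]
          have h0mem : (0:ℝ) ∈ Set.Icc (-(1/2):ℝ) (1/2) := by constructor <;> norm_num
          have hymem : y ∈ Set.Icc (-(1/2):ℝ) (1/2) := ⟨by linarith [hy.1], le_of_lt hy.2⟩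
          have := hg1mono h0mem hymem (le_of_lt hy.1)
          linarith [hg10 ▸ this]
      have h0mem : (0:ℝ) ∈ Set.Icc (0:ℝ) (1/2) := by constructor <;> norm_num
      have hxmem : x ∈ Set.Icc (0:ℝ) (1/2) := ⟨hx0, hx.2⟩
      have := hmono h0mem hxmem hx0
      linarith [hg0 ▸ this]
    · -- antitone on [-1/2,0]
      have hanti : AntitoneOn g (Set.Icc (-(1/2):ℝ) (0:ℝ)) := by
        apply antitoneOn_of_deriv_nonpos (convex_Icc _ _) hgcont.continuousOn
        · intro y hy
          exact (hderiv y).differentiableAt.differentiableWithinAt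
        · intro y hy
          rw [interior_Icc] at hy
          rw [(hderiv y).deriv]
          have h0mem : (0:ℝ) ∈ Set.Icc (-(1/2):ℝ) (1/2) := by constructor <;> norm_num
          have hymem : y ∈ Set.Icc (-(1/2):ℝ) (1/2) := ⟨le_of_lt hy.1, by linarith [hy.2]⟩
          have := hg1mono hymem h0mem (le_of_lt hy.2)
          linarith [hg10 ▸ this]
      have h0mem : (0:ℝ) ∈ Set.Icc (-(1/2):ℝ) (0:ℝ) := by constructor <;> norm_num
      have hxmem : x ∈ Set.Icc (-(1/2):ℝ) (0:ℝ) := ⟨hx.1, le_of_lt hx0⟩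
      have := hanti hxmem h0mem (le_of_lt hx0)
      linarith [hg0 ▸ this]
  intro ξ hξ
  have hξ1 : -(1/2:ℝ) ≤ ξ := neg_le_of_abs_le hξ
  have hξ2 : ξ ≤ (1/2:ℝ) := le_of_abs_le hξ
  have habs : |ξ + 1| = ξ + 1 := abs_of_pos (by linarith)
  have hkey : pOne σ ξ ≤ C * ξ ^ 2 := by
    have := hgnonneg ξ ⟨hξ1, hξ2⟩
    simp only [hg] at this
    rw [pOne, habs]
    linarith
  refine ⟨hkey, hkey.trans ?_⟩
  -- C ξ² ≤ σ(2σ−1)|ξ|^{2σ}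
  rcases eq_or_ne ξ 0 with rfl | hξ0
  · simp [Real.zero_rpow (by positivity : (2*σ) ≠ 0), hCpos.le]
  · have habsξ : 0 < |ξ| := abs_pos.mpr hξ0
    have h1 : ξ ^ 2 = |ξ| ^ (2*σ) * |ξ| ^ (2 - 2*σ) := by
      rw [← Real.rpow_add habsξ]
      rw [show 2*σ + (2 - 2*σ) = (2:ℝ) by ring]
      rw [show (2:ℝ) = ((2:ℕ):ℝ) by norm_num, Real.rpow_natCast, sq_abs]
    have h2 : (2:ℝ) ^ (2 - 2*σ) * |ξ| ^ (2 - 2*σ) ≤ 1 := by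
      rw [← Real.mul_rpow (by norm_num) (abs_nonneg ξ)]
      apply Real.rpow_le_one (by positivity) (by linarith [abs_nonneg ξ]) (by linarith)
    calc C * ξ ^ 2 = σ*(2*σ-1) * ((2:ℝ)^(2-2*σ) * |ξ|^(2-2*σ)) * |ξ|^(2*σ) := by
          rw [hCdef, h1]; ring
      _ ≤ σ*(2*σ-1) * 1 * |ξ|^(2*σ) := by
          apply mul_le_mul_of_nonneg_right _ (Real.rpow_nonneg (abs_nonneg ξ) _)
          apply mul_le_mul_of_nonneg_left h2 (by positivity)
      _ = σ*(2*σ-1) * |ξ|^(2*σ) := by ring
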